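/- Suppose a drawing of a graph K on vertex set V is obtained by routing, for each pair {u,v}, the edge along a randomly chosen path P_{uv} ∈ P_{uv} sampled with probability φ(P) (where Σ_{P∈P_{uv}} φ(P) = 1), independently over pairs, in a string representation of a graph G with n vertices and m edges. If two edges {u,v}, {u',v'} can only intersect when P_{uv} ∼ P_{u'v'} (meaning some w ∈ P_{uv}, w' ∈ P_{u'v'} satisfy {w,w'} ∈ E(G) or w = w'), then the expected number of intersecting pairs of edges is at most 8·m·vcong(φ)², where vcong(φ) = max_w Σ_{P ∋ w} c_P(w)φ(P) with c_P(w) = 1 for interior vertices and 1/2 for endpoints. -/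

import Mathlib

open Finset

variable {V : Type*} [Fintype V] [DecidableEq V] [LinearOrder V]

/-- The congestion of a vertex `w` under a multicommodity flow `φ` (pairs of vertices
represented by ordered pairs `u < v`): a path through `w` contributes `φ(P)` if `w` is an
interior vertex and `φ(P)/2` if `w` is an endpoint. -/
noncomputable def vertexCong17 (G : SimpleGraph V) [DecidableRel G.Adj]
    (φ : ∀ u v : V, G.Path u v → ℝ) (w : V) : ℝ :=
  ∑ p ∈ Finset.univ.filter (fun p : V × V => p.1 < p.2),
    ∑ P : G.Path p.1 p.2,
      (if w ∈ (P : G.Walk p.1 p.2).support then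
        (if w = p.1 ∨ w = p.2 then (1 : ℝ) / 2 else 1) else 0) * φ p.1 p.2 P

/-- The maximum vertex congestion of the flow `φ`. -/
noncomputable def vcong17 (G : SimpleGraph V) [DecidableRel G.Adj]
    (φ : ∀ u v : V, G.Path u v → ℝ) : ℝ :=
  sSup {x : ℝ | ∃ w : V, x = vertexCong17 G φ w}

private noncomputable def fwp17 (G : SimpleGraph V) [DecidableRel G.Adj]
    (φ : ∀ u v : V, G.Path u v → ℝ) (w : V) (p : V × V) : ℝ :=
  ∑ P : G.Path p.1 p.2, (if w ∈ (P : G.Walk p.1 p.2).support then φ p.1 p.2 P else 0)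

private lemma fwp17_nonneg (G : SimpleGraph V) [DecidableRel G.Adj]
    (φ : ∀ u v : V, G.Path u v → ℝ) (hφ0 : ∀ u v (P : G.Path u v), 0 ≤ φ u v P)
    (w : V) (p : V × V) : 0 ≤ fwp17 G φ w p := by
  refine Finset.sum_nonneg fun P _ => ?_
  split
  · exact hφ0 _ _ _
  · exact le_rfl

private lemma vertexCong17_nonneg (G : SimpleGraph V) [DecidableRel G.Adj]
    (φ : ∀ u v : V, G.Path u v → ℝ) (hφ0 : ∀ u v (P : G.Path u v), 0 ≤ φ u v P)
    (w : V) : 0 ≤ vertexCong17 G φ w := by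
  refine Finset.sum_nonneg fun p _ => Finset.sum_nonneg fun P _ => ?_
  refine mul_nonneg ?_ (hφ0 _ _ _)
  split
  · split <;> norm_num
  · exact le_rfl

private lemma vertexCong17_le (G : SimpleGraph V) [DecidableRel G.Adj]
    (φ : ∀ u v : V, G.Path u v → ℝ) (w : V) :
    vertexCong17 G φ w ≤ vcong17 G φ := by
  have hset : {x : ℝ | ∃ w : V, x = vertexCong17 G φ w} = Set.range (vertexCong17 G φ) := by
    ext x; simp [eq_comm, Set.mem_setOf_eq]
  rw [vcong17, hset]
  exact le_csSup (Set.finite_range _).bddAbove ⟨w, rfl⟩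

private lemma vcong17_nonneg (G : SimpleGraph V) [DecidableRel G.Adj]
    (φ : ∀ u v : V, G.Path u v → ℝ) (hφ0 : ∀ u v (P : G.Path u v), 0 ≤ φ u v P)
    (hne : Nonempty V) : 0 ≤ vcong17 G φ := by
  obtain ⟨w⟩ := hne
  exact (vertexCong17_nonneg G φ hφ0 w).trans (vertexCong17_le G φ w)

private lemma fwp17_sum_le (G : SimpleGraph V) [DecidableRel G.Adj]
    (φ : ∀ u v : V, G.Path u v → ℝ) (hφ0 : ∀ u v (P : G.Path u v), 0 ≤ φ u v P)
    (w : V) :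
    ∑ p ∈ Finset.univ.filter (fun p : V × V => p.1 < p.2), fwp17 G φ w p
      ≤ 2 * vcong17 G φ := by
  have h1 : ∑ p ∈ Finset.univ.filter (fun p : V × V => p.1 < p.2), fwp17 G φ w p
      ≤ 2 * vertexCong17 G φ w := by
    rw [vertexCong17, Finset.mul_sum]
    refine Finset.sum_le_sum fun p _ => ?_
    rw [fwp17, Finset.mul_sum]
    refine Finset.sum_le_sum fun P _ => ?_
    by_cases hw : w ∈ (P : G.Walk p.1 p.2).support
    · rw [if_pos hw, if_pos hw]
      have := hφ0 p.1 p.2 P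
      by_cases he : w = p.1 ∨ w = p.2
      · rw [if_pos he]; nlinarith
      · rw [if_neg he]; nlinarith
    · simp [hw]
  calc _ ≤ 2 * vertexCong17 G φ w := h1
    _ ≤ 2 * vcong17 G φ := by linarith [vertexCong17_le G φ w]

private lemma sum_fiber17 {α β γ : Type*} [Fintype β] [Fintype γ] [DecidableEq β] [DecidableEq γ]
    (s : Finset α) (F : α → β) (K : α → γ) (h : α → ℝ) :
    ∑ b : β, ∑ c : γ, ∑ a ∈ s.filter (fun a => F a = b ∧ K a = c), h a = ∑ a ∈ s, h a := by
  classical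
  simp only [Finset.sum_filter]
  conv_lhs => enter [2, b]; rw [Finset.sum_comm]
  rw [Finset.sum_comm]
  refine Finset.sum_congr rfl fun a _ => ?_
  simp [ite_and, Finset.sum_ite_eq]

private lemma card_le17 {W : Type*} [Fintype W] [DecidableEq W] (G : SimpleGraph W)
    [DecidableRel G.Adj] (hconn : G.Connected) :
    Fintype.card W ≤ G.edgeFinset.card + 1 := by
  classical
  obtain ⟨r⟩ := hconn.nonempty
  have hstep : ∀ v : W, v ≠ r → ∃ u, G.Adj v u ∧ G.dist u r < G.dist v r := by
    intro v hv
    obtain ⟨p, hp, hlen⟩ := hconn.exists_path_of_dist v r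
    cases p with
    | nil => exact absurd rfl hv
    | cons h q =>
      refine ⟨_, h, ?_⟩
      have h2 := SimpleGraph.dist_le q
      simp only [SimpleGraph.Walk.length_cons] at hlen
      omega
  choose nb hnb hlt using hstep
  have hinj : Function.Injective
      (fun v : {v : W // v ≠ r} =>
        (⟨s(v.1, nb v.1 v.2), (G.mem_edgeFinset).2 ((G.mem_edgeSet).2 (hnb v.1 v.2))⟩ :
        G.edgeFinset)) := by
    rintro ⟨v, hv⟩ ⟨v', hv'⟩ hE
    simp only [Subtype.mk.injEq, Sym2.eq, Sym2.rel_iff', Prod.mk.injEq, Prod.swap_prod_mk] at hE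
    rcases hE with ⟨h1, _⟩ | ⟨h1, h2⟩
    · exact Subtype.ext h1
    · exfalso
      have l1 := hlt v hv
      have l2 := hlt v' hv'
      rw [h2] at l1
      rw [← h1] at l2
      omega
  have hcard := Fintype.card_le_of_injective _ hinj
  have h1 : Fintype.card {v : W // v ≠ r} = Fintype.card W - 1 := by
    simp [Fintype.card_subtype_compl]
  have h2 : Fintype.card G.edgeFinset = G.edgeFinset.card := Fintype.card_coe _
  have h3 : 1 ≤ Fintype.card W := @Fintype.card_pos _ _ ⟨r⟩
  omega

/-- Expected number of crossings when drawing `K_n` along random flow paths in a string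
representation of `G`: if each edge `{u,v}` of the complete graph is routed along a random
path `P_{uv}` sampled with probability `φ(P)` (independently over pairs, encoded by a
finite sample space `Ω` with the product joint distribution), and two edges can only
intersect when their chosen paths contain vertices `w, w'` with `w = w'` or `{w,w'} ∈ E(G)`,
then the expected number of intersecting (unordered) pairs of edges is at most
`8·m·vcong(φ)²`. -/
theorem stmt_17 (G : SimpleGraph V) [DecidableRel G.Adj] (hconn : G.Connected)
    (n m : ℕ) (hn : Fintype.card V = n) (hm : G.edgeFinset.card = m)
    (φ : ∀ u v : V, G.Path u v → ℝ)
    (hφ0 : ∀ u v (P : G.Path u v), 0 ≤ φ u v P)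
    (hφ1 : ∀ u v : V, u < v → ∑ P : G.Path u v, φ u v P = 1)
    (Ω : Type*) [Fintype Ω] [DecidableEq Ω] (Pr : Ω → ℝ)
    (hPr0 : ∀ ω, 0 ≤ Pr ω) (hPr1 : ∑ ω, Pr ω = 1)
    (PW : Ω → ∀ u v : V, G.Path u v)
    (hjoint : ∀ u v u' v' : V, u < v → u' < v' → (u, v) ≠ (u', v') →
      ∀ (P : G.Path u v) (P' : G.Path u' v'),
        ∑ ω ∈ Finset.univ.filter (fun ω => PW ω u v = P ∧ PW ω u' v' = P'), Pr ω
          = φ u v P * φ u' v' P')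
    (Inter : Ω → V × V → V × V → Bool)
    (hsym : ∀ ω p q, Inter ω p q = Inter ω q p)
    (hconf : ∀ ω (p q : V × V), p.1 < p.2 → q.1 < q.2 → Inter ω p q = true →
      ∃ w ∈ (PW ω p.1 p.2 : G.Walk p.1 p.2).support,
        ∃ w' ∈ (PW ω q.1 q.2 : G.Walk q.1 q.2).support, w = w' ∨ G.Adj w w') :
    ∑ ω, Pr ω *
        (((Finset.univ.filter (fun pq : (V × V) × (V × V) =>
          pq.1.1 < pq.1.2 ∧ pq.2.1 < pq.2.2 ∧ pq.1 ≠ pq.2 ∧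
            Inter ω pq.1 pq.2 = true)).card : ℝ) / 2)
      ≤ 8 * (m : ℝ) * (vcong17 G φ) ^ 2 := by
  classical
  have hneV : Nonempty V := hconn.nonempty
  have hvc0 : 0 ≤ vcong17 G φ := vcong17_nonneg G φ hφ0 hneV
  by_cases hV2' : Fintype.card V ≤ 1
  · have hsub : Subsingleton V := Fintype.card_le_one_iff_subsingleton.1 hV2'
    have h0 : ∀ ω, (Finset.univ.filter (fun pq : (V × V) × (V × V) =>
        pq.1.1 < pq.1.2 ∧ pq.2.1 < pq.2.2 ∧ pq.1 ≠ pq.2 ∧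
          Inter ω pq.1 pq.2 = true)).card = 0 := by
      intro ω
      rw [Finset.card_eq_zero, Finset.filter_eq_empty_iff]
      rintro pq -
      intro hc
      exact absurd (Subsingleton.elim pq.1.1 pq.1.2) (ne_of_lt hc.1)
    have : ∑ ω, Pr ω * (((Finset.univ.filter (fun pq : (V × V) × (V × V) =>
        pq.1.1 < pq.1.2 ∧ pq.2.1 < pq.2.2 ∧ pq.1 ≠ pq.2 ∧
          Inter ω pq.1 pq.2 = true)).card : ℝ) / 2) = 0 := by
      refine Finset.sum_eq_zero fun ω _ => ?_
      rw [h0 ω]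
      norm_num
    rw [this]
    positivity
  have hV2 : 2 ≤ Fintype.card V := by omega
  -- notation
  set I : Finset (V × V) := Finset.univ.filter (fun p : V × V => p.1 < p.2) with hIdef
  set A : Finset (V × V) :=
    Finset.univ.filter (fun ww : V × V => ww.1 = ww.2 ∨ G.Adj ww.1 ww.2) with hAdef
  set D : Finset ((V × V) × (V × V)) :=
    Finset.univ.filter (fun pq : (V × V) × (V × V) =>
      pq.1.1 < pq.1.2 ∧ pq.2.1 < pq.2.2 ∧ pq.1 ≠ pq.2) with hDdef
  -- independence
  have key : ∀ p ∈ I, ∀ q ∈ I, p ≠ q → ∀ w w' : V,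
      ∑ ω ∈ Finset.univ.filter (fun ω =>
          w ∈ (PW ω p.1 p.2 : G.Walk p.1 p.2).support ∧
          w' ∈ (PW ω q.1 q.2 : G.Walk q.1 q.2).support), Pr ω
        = fwp17 G φ w p * fwp17 G φ w' q := by
    intro p hp q hq hpq w w'
    have hp' : p.1 < p.2 := (Finset.mem_filter.1 hp).2
    have hq' : q.1 < q.2 := (Finset.mem_filter.1 hq).2
    have hne : (p.1, p.2) ≠ (q.1, q.2) := by
      simpa using hpq
    rw [← sum_fiber17 (Finset.univ.filter (fun ω =>
        w ∈ (PW ω p.1 p.2 : G.Walk p.1 p.2).support ∧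
        w' ∈ (PW ω q.1 q.2 : G.Walk q.1 q.2).support))
        (fun ω => PW ω p.1 p.2) (fun ω => PW ω q.1 q.2) Pr]
    rw [fwp17, fwp17, Finset.sum_mul_sum]
    refine Finset.sum_congr rfl fun P _ => Finset.sum_congr rfl fun P' _ => ?_
    rw [Finset.filter_filter]
    by_cases h1 : w ∈ (P : G.Walk p.1 p.2).support
    · by_cases h2 : w' ∈ (P' : G.Walk q.1 q.2).support
      · rw [if_pos h1, if_pos h2, ← hjoint p.1 p.2 q.1 q.2 hp' hq' hne P P']
        refine Finset.sum_congr ?_ fun _ _ => rfl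
        ext ω
        simp only [Finset.mem_filter, Finset.mem_univ, true_and]
        constructor
        · rintro ⟨_, hP, hP'⟩; exact ⟨hP, hP'⟩
        · rintro ⟨hP, hP'⟩
          refine ⟨⟨?_, ?_⟩, hP, hP'⟩
          · rw [hP]; exact h1
          · rw [hP']; exact h2
      · rw [if_neg h2, mul_zero]
        rw [Finset.sum_eq_zero]
        rintro ω hω
        simp only [Finset.mem_filter, Finset.mem_univ, true_and] at hω
        exact absurd (hω.2.2 ▸ hω.1.2) h2
    · rw [if_neg h1, zero_mul]
      rw [Finset.sum_eq_zero]
      rintro ω hω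
      simp only [Finset.mem_filter, Finset.mem_univ, true_and] at hω
      exact absurd (hω.2.1 ▸ hω.1.1) h1
  -- union bound
  have hub : ∀ p ∈ I, ∀ q ∈ I, p ≠ q →
      ∑ ω ∈ Finset.univ.filter (fun ω => Inter ω p q = true), Pr ω
        ≤ ∑ ww ∈ A, fwp17 G φ ww.1 p * fwp17 G φ ww.2 q := by
    intro p hp q hq hpq
    have hp' : p.1 < p.2 := (Finset.mem_filter.1 hp).2
    have hq' : q.1 < q.2 := (Finset.mem_filter.1 hq).2
    have hA : ∀ ww ∈ A, fwp17 G φ ww.1 p * fwp17 G φ ww.2 q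
        = ∑ ω ∈ Finset.univ.filter (fun ω =>
            ww.1 ∈ (PW ω p.1 p.2 : G.Walk p.1 p.2).support ∧
            ww.2 ∈ (PW ω q.1 q.2 : G.Walk q.1 q.2).support), Pr ω :=
      fun ww _ => (key p hp q hq hpq ww.1 ww.2).symm
    rw [Finset.sum_congr rfl hA]
    simp only [Finset.sum_filter]
    rw [Finset.sum_comm]
    refine Finset.sum_le_sum fun ω _ => ?_
    by_cases hi : Inter ω p q = true
    · rw [if_pos hi]
      obtain ⟨w, hw, w', hw', hww⟩ := hconf ω p q hp' hq' hi
      have hwA : (w, w') ∈ A := by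
        simp only [hAdef, Finset.mem_filter, Finset.mem_univ, true_and]
        exact hww
      have hsl := Finset.single_le_sum (f := fun ww : V × V =>
          if ww.1 ∈ (PW ω p.1 p.2 : G.Walk p.1 p.2).support ∧
             ww.2 ∈ (PW ω q.1 q.2 : G.Walk q.1 q.2).support then Pr ω else 0)
          (fun ww _ => by split
                          · exact hPr0 ω
                          · exact le_rfl) hwA
      simpa [hw, hw'] using hsl
    · rw [if_neg hi]
      refine Finset.sum_nonneg fun ww _ => ?_
      split
      · exact hPr0 ω
      · exact le_rfl
  -- count A
  have hAcard : (A.card : ℝ) ≤ 4 * m := by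
    have hb : A ⊆ (Finset.univ.filter (fun ww : V × V => ww.1 = ww.2))
        ∪ (Finset.univ.filter (fun ww : V × V => G.Adj ww.1 ww.2)) := by
      intro x hx
      rw [hAdef, Finset.mem_filter] at hx
      rw [Finset.mem_union, Finset.mem_filter, Finset.mem_filter]
      tauto
    have hdiag : (Finset.univ.filter (fun ww : V × V => ww.1 = ww.2)).card = n := by
      rw [← hn, ← Finset.card_univ (α := V)]
      refine Finset.card_bij (fun ww _ => ww.1) (fun _ _ => Finset.mem_univ _) ?_ ?_
      · rintro ⟨a, b⟩ hab ⟨c, d⟩ hcd h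
        simp only [Finset.mem_filter] at hab hcd
        simp only at h
        subst h
        simp only [Prod.mk.injEq]
        exact ⟨trivial, hab.2.symm.trans hcd.2⟩
      · intro v _
        exact ⟨(v, v), by simp, rfl⟩
    have hadj : (Finset.univ.filter (fun ww : V × V => G.Adj ww.1 ww.2)).card = 2 * m := by
      rw [← hm, SimpleGraph.two_mul_card_edgeFinset]
    have hcount : A.card ≤ n + 2 * m := by
      calc A.card ≤ _ := Finset.card_le_card hb
        _ ≤ _ := Finset.card_union_le _ _
        _ = n + 2 * m := by rw [hdiag, hadj]
    have hnm : n ≤ m + 1 := by rw [← hn, ← hm]; exact card_le17 G hconn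
    have hn2 : 2 ≤ n := by rw [← hn]; exact hV2
    have : A.card ≤ 4 * m := by omega
    calc (A.card : ℝ) ≤ ((4 * m : ℕ) : ℝ) := Nat.cast_le.2 this
      _ = 4 * m := by push_cast; ring
  -- rewrite the LHS
  have hfilter : ∀ ω, Finset.univ.filter (fun pq : (V × V) × (V × V) =>
      pq.1.1 < pq.1.2 ∧ pq.2.1 < pq.2.2 ∧ pq.1 ≠ pq.2 ∧ Inter ω pq.1 pq.2 = true)
      = D.filter (fun pq => Inter ω pq.1 pq.2 = true) := by
    intro ω
    rw [hDdef, Finset.filter_filter]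
    ext pq
    simp only [Finset.mem_filter, Finset.mem_univ, true_and]
    tauto
  have hcard : ∀ ω, ((Finset.univ.filter (fun pq : (V × V) × (V × V) =>
      pq.1.1 < pq.1.2 ∧ pq.2.1 < pq.2.2 ∧ pq.1 ≠ pq.2 ∧ Inter ω pq.1 pq.2 = true)).card : ℝ)
      = ∑ pq ∈ D, (if Inter ω pq.1 pq.2 = true then (1 : ℝ) else 0) := by
    intro ω
    rw [hfilter ω, Finset.sum_boole]
  have e1 : ∑ ω, Pr ω * (((Finset.univ.filter (fun pq : (V × V) × (V × V) =>
      pq.1.1 < pq.1.2 ∧ pq.2.1 < pq.2.2 ∧ pq.1 ≠ pq.2 ∧ Inter ω pq.1 pq.2 = true)).card : ℝ) / 2)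
      = ∑ pq ∈ D, (∑ ω ∈ Finset.univ.filter (fun ω => Inter ω pq.1 pq.2 = true), Pr ω) / 2 := by
    have epoint : ∀ ω, Pr ω * ((∑ pq ∈ D, if Inter ω pq.1 pq.2 = true then (1 : ℝ) else 0) / 2)
        = ∑ pq ∈ D, (if Inter ω pq.1 pq.2 = true then Pr ω else 0) / 2 := by
      intro ω
      rw [Finset.sum_div, Finset.mul_sum]
      refine Finset.sum_congr rfl fun pq _ => ?_
      split <;> simp [div_eq_mul_inv]
    calc ∑ ω, Pr ω * (((Finset.univ.filter (fun pq : (V × V) × (V × V) =>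
          pq.1.1 < pq.1.2 ∧ pq.2.1 < pq.2.2 ∧ pq.1 ≠ pq.2 ∧ Inter ω pq.1 pq.2 = true)).card : ℝ) / 2)
        = ∑ ω, ∑ pq ∈ D, (if Inter ω pq.1 pq.2 = true then Pr ω else 0) / 2 := by
          refine Finset.sum_congr rfl fun ω _ => ?_
          rw [hcard ω, epoint ω]
      _ = ∑ pq ∈ D, ∑ ω, (if Inter ω pq.1 pq.2 = true then Pr ω else 0) / 2 := Finset.sum_comm
      _ = ∑ pq ∈ D, (∑ ω ∈ Finset.univ.filter (fun ω => Inter ω pq.1 pq.2 = true), Pr ω) / 2 := by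
          refine Finset.sum_congr rfl fun pq _ => ?_
          rw [Finset.sum_filter, Finset.sum_div]
  rw [e1]
  have e2 : ∑ pq ∈ D, (∑ ω ∈ Finset.univ.filter (fun ω => Inter ω pq.1 pq.2 = true), Pr ω) / 2
      ≤ ∑ pq ∈ D, (∑ ww ∈ A, fwp17 G φ ww.1 pq.1 * fwp17 G φ ww.2 pq.2) / 2 := by
    refine Finset.sum_le_sum fun pq hpq => ?_
    rw [hDdef] at hpq
    simp only [Finset.mem_filter, Finset.mem_univ, true_and] at hpq
    have h1 : pq.1 ∈ I := by rw [hIdef]; simp [hpq.1]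
    have h2 : pq.2 ∈ I := by rw [hIdef]; simp [hpq.2.1]
    exact div_le_div_of_nonneg_right (hub pq.1 h1 pq.2 h2 hpq.2.2) (by norm_num)
  refine le_trans e2 ?_
  have e3 : ∑ pq ∈ D, (∑ ww ∈ A, fwp17 G φ ww.1 pq.1 * fwp17 G φ ww.2 pq.2) / 2
      ≤ ∑ pq ∈ I ×ˢ I, (∑ ww ∈ A, fwp17 G φ ww.1 pq.1 * fwp17 G φ ww.2 pq.2) / 2 := by
    refine Finset.sum_le_sum_of_subset_of_nonneg ?_ ?_
    · intro pq hpq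
      rw [hDdef] at hpq
      simp only [Finset.mem_filter, Finset.mem_univ, true_and] at hpq
      rw [Finset.mem_product, hIdef]
      simp [hpq.1, hpq.2.1]
    · intro pq _ _
      refine div_nonneg (Finset.sum_nonneg fun ww _ => mul_nonneg ?_ ?_) (by norm_num)
      · exact fwp17_nonneg G φ hφ0 _ _
      · exact fwp17_nonneg G φ hφ0 _ _
  refine le_trans e3 ?_
  have e4 : ∑ pq ∈ I ×ˢ I, (∑ ww ∈ A, fwp17 G φ ww.1 pq.1 * fwp17 G φ ww.2 pq.2) / 2
      = ∑ ww ∈ A, ((∑ p ∈ I, fwp17 G φ ww.1 p) * (∑ q ∈ I, fwp17 G φ ww.2 q)) / 2 := by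
    rw [← Finset.sum_div, ← Finset.sum_div]
    congr 1
    rw [Finset.sum_comm]
    refine Finset.sum_congr rfl fun ww _ => ?_
    rw [Finset.sum_product, Finset.sum_mul_sum]
  rw [e4]
  have e5 : ∑ ww ∈ A, ((∑ p ∈ I, fwp17 G φ ww.1 p) * (∑ q ∈ I, fwp17 G φ ww.2 q)) / 2
      ≤ ∑ ww ∈ A, (2 * vcong17 G φ) * (2 * vcong17 G φ) / 2 := by
    refine Finset.sum_le_sum fun ww _ => ?_
    refine div_le_div_of_nonneg_right ?_ (by norm_num)
    refine mul_le_mul (fwp17_sum_le G φ hφ0 ww.1) (fwp17_sum_le G φ hφ0 ww.2)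
      (Finset.sum_nonneg fun p _ => fwp17_nonneg G φ hφ0 _ _) (by linarith)
  refine le_trans e5 ?_
  rw [Finset.sum_const, nsmul_eq_mul]
  nlinarith [mul_nonneg (sub_nonneg.2 hAcard) (sq_nonneg (vcong17 G φ))]
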